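/- For n > 0, the q-Lucas polynomial satisfies L_n(x,s,q) = F_{n+1}(x,s,q) + s·F_{n-1}(x,s,q), where L_n(x,s,q) = ∑_{k=0}^{⌊n/2⌋} q^{C(k,2)} · ([n]/[n-k]) · qbinom(n-k,k) · s^k · x^{n-2k}. -/

import Mathlib

open Finset

noncomputable section

abbrev K : Type := RatFunc ℚ

def q : K := RatFunc.X

def qint (a : K) (m : ℕ) : K := ∑ i ∈ range m, a ^ i

def qfact (a : K) (m : ℕ) : K := ∏ i ∈ range m, qint a (i + 1)

def qbinom (a : K) (n k : ℕ) : K :=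
  if k ≤ n then qfact a n / (qfact a k * qfact a (n - k)) else 0

/-- q-Fibonacci polynomials F_n(x,s,q) with base `a`. -/
def qF (a x s : K) : ℕ → K
  | 0 => 0
  | n + 1 => ∑ k ∈ range (n / 2 + 1),
      a ^ (k * (k + 1) / 2) * qbinom a (n - k) k * s ^ k * x ^ (n - 2 * k)

/-- q-Lucas polynomials L_n(x,s,q) with base `a` (L_0 = 2). -/
def qL (a x s : K) (n : ℕ) : K :=
  if n = 0 then 2 else
  ∑ k ∈ range (n / 2 + 1),
    a ^ (k * (k - 1) / 2) * (qint a n / qint a (n - k)) * qbinom a (n - k) k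
      * s ^ k * x ^ (n - 2 * k)

/-- Starred variant: L*_0 = 1, L*_n = L_n for n > 0. -/
def qLs (a x s : K) (n : ℕ) : K := if n = 0 then 1 else qL a x s n

/-- Rogers-Szegő polynomial. -/
def rs (a x y : K) (m : ℕ) : K := ∑ j ∈ range (m + 1), qbinom a m j * x ^ j * y ^ (m - j)

/-- q-Pochhammer (q;q)_m. -/
def qpoch (a : K) (m : ℕ) : K := ∏ j ∈ range m, (1 - a ^ (j + 1))

lemma qint_ne_zero (m : ℕ) (hm : m ≠ 0) : qint q m ≠ 0 := by
  have h : qint q m = algebraMap (Polynomial ℚ) K (∑ i ∈ range m, Polynomial.X ^ i) := by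
    simp [qint, q, map_sum, map_pow, RatFunc.algebraMap_X]
  rw [h]
  apply RatFunc.algebraMap_ne_zero
  intro hzero
  have : (∑ i ∈ range m, (Polynomial.X : Polynomial ℚ) ^ i).coeff 0 = 1 := by
    rw [Polynomial.finset_sum_coeff]
    simp only [Polynomial.coeff_X_pow]
    rw [Finset.sum_ite_eq (range m) 0 (fun _ => (1:ℚ))]
    simp [Nat.pos_of_ne_zero hm]
  rw [hzero] at this
  simp at this

lemma qfact_ne_zero (m : ℕ) : qfact q m ≠ 0 := by
  unfold qfact
  exact Finset.prod_ne_zero_iff.mpr fun i _ => qint_ne_zero (i+1) (by omega)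

lemma qfact_succ (m : ℕ) : qfact q (m+1) = qfact q m * qint q (m+1) :=
  Finset.prod_range_succ _ _

lemma qint_split (n k : ℕ) (h : k ≤ n) :
    qint q n = qint q k + q ^ k * qint q (n - k) := by
  have : n = k + (n - k) := by omega
  rw [this]
  unfold qint
  rw [Finset.sum_range_add, Finset.mul_sum]
  simp [pow_add, Nat.add_sub_cancel_left]

lemma qbinom_shift (m j : ℕ) (h : j + 1 ≤ m) :
    qbinom q (m - 1) j * qint q m = qbinom q m (j + 1) * qint q (j + 1) := by
  unfold qbinom
  rw [if_pos (by omega), if_pos (by omega)]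
  have hm : m = (m - 1) + 1 := by omega
  have hfm : qfact q m = qfact q (m-1) * qint q m := by
    rw [hm, qfact_succ]; rw [← hm]
  have hfk : qfact q (j+1) = qfact q j * qint q (j+1) := qfact_succ j
  have hsub : m - (j+1) = m - 1 - j := by omega
  rw [hsub, hfm, hfk]
  have h1 := qfact_ne_zero (m-1)
  have h2 := qfact_ne_zero j
  have h3 := qfact_ne_zero (m-1-j)
  have h4 := qint_ne_zero m (by omega)
  have h5 := qint_ne_zero (j+1) (by omega)
  field_simp

lemma key (m j : ℕ) (h : 2 * j ≤ m) :
    q ^ ((j+1) * j / 2) * (qint q (m+2) / qint q (m+1-j)) * qbinom q (m+1-j) (j+1)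
      = q ^ ((j+1) * (j+1+1) / 2) * qbinom q (m+1-j) (j+1)
        + q ^ (j * (j+1) / 2) * qbinom q (m-j) j := by
  have hje : (j+1) * (j+1+1) / 2 = (j+1) * j / 2 + (j+1) := by
    obtain ⟨c, hc⟩ := Nat.even_mul_succ_self j
    have e0 : (j+1) * j = j * (j+1) := Nat.mul_comm _ _
    have e1 : (j+1) * (j+1+1) = (j+1) * j + 2*(j+1) := by ring
    omega
  have hje2 : j * (j+1) / 2 = (j+1) * j / 2 := by rw [Nat.mul_comm]
  rw [hje, hje2, pow_add]
  have hmj : m - j = (m + 1 - j) - 1 := by omega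
  have hbs := qbinom_shift (m+1-j) j (by omega)
  rw [hmj]
  have hsplit := qint_split (m+2) (j+1) (by omega)
  have hsub : m + 2 - (j+1) = m + 1 - j := by omega
  rw [hsub] at hsplit
  have hB := qint_ne_zero (m+1-j) (by omega)
  set A := qint q (m+2)
  set B := qint q (m+1-j)
  set C := qint q (j+1)
  set b1 := qbinom q (m+1-j) (j+1)
  set b2 := qbinom q (m+1-j-1) j
  field_simp
  linear_combination q ^ ((j+1)*j/2) * b1 * hsplit - q ^ ((j+1)*j/2) * hbs
theorem stmt3 (x s : K) (n : ℕ) (hn : 0 < n) :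
    qL q x s n = qF q x s (n + 1) + s * qF q x s (n - 1) := by
  match n, hn with
  | 1, _ =>
    simp [qL, qF, qbinom, qfact, qint]
  | (m+2), _ =>
    have hL : qL q x s (m+2) = ∑ k ∈ range ((m+2)/2 + 1),
        q ^ (k * (k - 1) / 2) * (qint q (m+2) / qint q (m+2 - k)) * qbinom q (m+2 - k) k
          * s ^ k * x ^ (m+2 - 2 * k) := by
      rw [qL, if_neg (by omega)]
    have hF : qF q x s (m+2+1) = ∑ k ∈ range ((m+2)/2 + 1),
        q ^ (k * (k + 1) / 2) * qbinom q (m+2 - k) k * s ^ k * x ^ (m+2 - 2 * k) := by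
      rfl
    have h21 : m + 2 - 1 = m + 1 := by omega
    have hF' : qF q x s (m+1) = ∑ k ∈ range (m/2 + 1),
        q ^ (k * (k + 1) / 2) * qbinom q (m - k) k * s ^ k * x ^ (m - 2 * k) := by
      rfl
    rw [hL, hF, h21, hF', Finset.mul_sum]
    have hd : (m+2)/2 + 1 = m/2 + 1 + 1 := by omega
    rw [hd, Finset.sum_range_succ' _ (m/2+1), Finset.sum_range_succ' _ (m/2+1)]
    have h00 : q ^ (0 * (0 - 1) / 2) * (qint q (m + 2) / qint q (m + 2 - 0)) * qbinom q (m + 2 - 0) 0 * s ^ 0 *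
        x ^ (m + 2 - 2 * 0)
        = q ^ (0 * (0 + 1) / 2) * qbinom q (m + 2 - 0) 0 * s ^ 0 * x ^ (m + 2 - 2 * 0) := by
      simp [div_self (qint_ne_zero (m+2) (by omega))]
    rw [h00]
    have hsum : ∑ k ∈ Finset.range (m / 2 + 1),
        q ^ ((k + 1) * (k + 1 - 1) / 2) * (qint q (m + 2) / qint q (m + 2 - (k + 1))) *
              qbinom q (m + 2 - (k + 1)) (k + 1) * s ^ (k + 1) * x ^ (m + 2 - 2 * (k + 1))
        = ∑ k ∈ Finset.range (m / 2 + 1),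
          (q ^ ((k + 1) * (k + 1 + 1) / 2) * qbinom q (m + 2 - (k + 1)) (k + 1) * s ^ (k + 1) *
            x ^ (m + 2 - 2 * (k + 1))
          + s * (q ^ (k * (k + 1) / 2) * qbinom q (m - k) k * s ^ k * x ^ (m - 2 * k))) := by
      apply Finset.sum_congr rfl
      intro k hk
      have hk' : 2 * k ≤ m := by
        have := Finset.mem_range.mp hk
        omega
      have hsub1 : m + 2 - (k + 1) = m + 1 - k := by omega
      have hsub2 : m + 2 - 2 * (k + 1) = m - 2 * k := by omega
      have hsub3 : k + 1 - 1 = k := by omega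
      rw [hsub1, hsub2, hsub3]
      linear_combination s ^ (k + 1) * x ^ (m - 2 * k) * key m k hk'
    rw [hsum, Finset.sum_add_distrib]
    ring
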